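/- Let A be a commutative Poisson algebra containing invertible elements X^(0),...,X^(n) and elements Y^(0),...,Y^(n) satisfying {X^(k), X^(l)} = 0, {X^(k), Y^(l)} = (k−l) θ(k−l) X^(k) X^(l), {Y^(k), Y^(l)} = (k−l)(θ(k−l) Y^(k) X^(l) + θ(l−k) X^(k) Y^(l)). Define E_i = X^(n−i+1)/X^(n−i) and p_i = Y^(n−i+1)/X^(n−i+1) − Y^(n−i)/X^(n−i) for 1 ≤ i ≤ n. Then {E_i, E_j} = 0, {E_i, p_j} = −δ_{ij} E_i, and {p_i, p_j} = 0. -/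

import Mathlib

private def cc (A : Type*) [CommRing A] (k l : ℕ) : A :=
  if l < k then ((k : A) - (l : A)) else 0

private lemma cc_of_le {A : Type*} [CommRing A] {k l : ℕ} (h : k ≤ l) : cc A k l = 0 := by
  simp [cc, not_lt.mpr h]

private lemma cc_of_ge {A : Type*} [CommRing A] {k l : ℕ} (h : l ≤ k) :
    cc A k l = (k : A) - (l : A) := by
  rcases h.lt_or_eq with h | h
  · simp [cc, h]
  · subst h; simp [cc]

/-- Canonical Poisson brackets for the reconstructed classical Toda variables
`E_i = X^(n−i+1)/X^(n−i)` and `p_i = Y^(n−i+1)/X^(n−i+1) − Y^(n−i)/X^(n−i)`. -/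
theorem toda_classical_canonical (n : ℕ) (A : Type*) [CommRing A]
    (P : A → A → A)
    (Padd : ∀ a b c : A, P (a + b) c = P a c + P b c)
    (Pskew : ∀ a b : A, P a b = - P b a)
    (Pleib : ∀ a b c : A, P (a * b) c = a * P b c + b * P a c)
    (Pjac : ∀ a b c : A, P (P a b) c + P (P b c) a + P (P c a) b = 0)
    (X Y Xinv : ℕ → A)
    (hXinv : ∀ k : ℕ, k ≤ n → X k * Xinv k = 1)
    (hXX : ∀ k l : ℕ, k ≤ n → l ≤ n → P (X k) (X l) = 0)
    (hXY : ∀ k l : ℕ, k ≤ n → l ≤ n → P (X k) (Y l) =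
      (if l < k then ((k : A) - (l : A)) else 0) * (X k * X l))
    (hYY : ∀ k l : ℕ, k ≤ n → l ≤ n → P (Y k) (Y l) = ((k : A) - (l : A)) *
      ((if l < k then Y k * X l else 0) + (if k < l then X k * Y l else 0)))
    (E p : ℕ → A)
    (hE : ∀ i : ℕ, 1 ≤ i → i ≤ n → E i = X (n - i + 1) * Xinv (n - i))
    (hp : ∀ i : ℕ, 1 ≤ i → i ≤ n →
      p i = Y (n - i + 1) * Xinv (n - i + 1) - Y (n - i) * Xinv (n - i)) :
    ∀ i j : ℕ, 1 ≤ i → i ≤ n → 1 ≤ j → j ≤ n →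
      P (E i) (E j) = 0 ∧
      P (E i) (p j) = -(if i = j then E i else 0) ∧
      P (p i) (p j) = 0 := by
  have hXY' : ∀ k l : ℕ, k ≤ n → l ≤ n → P (X k) (Y l) = cc A k l * (X k * X l) := by
    intro k l hk hl
    rw [hXY k l hk hl]; rfl
  -- basic structural consequences
  have Pone : ∀ a : A, P 1 a = 0 := by
    intro a
    have h := Pleib 1 1 a
    simp only [one_mul] at h
    exact left_eq_add.mp h
  have Pone2 : ∀ a : A, P a 1 = 0 := by intro a; rw [Pskew, Pone, neg_zero]
  have Padd2 : ∀ a b c : A, P a (b + c) = P a b + P a c := by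
    intro a b c; rw [Pskew, Padd, neg_add, ← Pskew, ← Pskew]
  have Pleib2 : ∀ a b c : A, P a (b * c) = b * P a c + c * P a b := by
    intro a b c
    rw [Pskew, Pleib, neg_add, ← mul_neg, ← mul_neg, ← Pskew, ← Pskew]
  have Psub2 : ∀ a b c : A, P a (b - c) = P a b - P a c := by
    intro a b c
    have h := Padd2 a (b - c) c
    rw [sub_add_cancel] at h
    exact eq_sub_of_add_eq h.symm
  have Psub1 : ∀ a b c : A, P (a - b) c = P a c - P b c := by
    intro a b c
    have h := Padd (a - b) b c
    rw [sub_add_cancel] at h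
    exact eq_sub_of_add_eq h.symm
  have hcancel : ∀ l : ℕ, l ≤ n → ∀ t s : A, X l * t = s → t = Xinv l * s := by
    intro l hl t s h
    calc t = (X l * Xinv l) * t := by rw [hXinv l hl, one_mul]
    _ = Xinv l * (X l * t) := by ring
    _ = Xinv l * s := by rw [h]
  -- brackets with Xinv
  have hXXinv : ∀ k l : ℕ, k ≤ n → l ≤ n → P (X k) (Xinv l) = 0 := by
    intro k l hk hl
    have h := Pleib2 (X k) (X l) (Xinv l)
    rw [hXinv l hl, Pone2, hXX k l hk hl, mul_zero, add_zero] at h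
    have h2 := hcancel l hl _ _ h.symm
    rw [h2, mul_zero]
  have hXinvX : ∀ k l : ℕ, k ≤ n → l ≤ n → P (Xinv k) (X l) = 0 := by
    intro k l hk hl; rw [Pskew, hXXinv l k hl hk, neg_zero]
  have hXinvXinv : ∀ k l : ℕ, k ≤ n → l ≤ n → P (Xinv k) (Xinv l) = 0 := by
    intro k l hk hl
    have h := Pleib (X k) (Xinv k) (Xinv l)
    rw [hXinv k hk, Pone, hXXinv k l hk hl, mul_zero, add_zero] at h
    have h2 := hcancel k hk _ _ h.symm
    rw [h2, mul_zero]
  have hYXinv : ∀ k l : ℕ, k ≤ n → l ≤ n →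
      P (Y k) (Xinv l) = cc A l k * (X k * Xinv l) := by
    intro k l hk hl
    have h := Pleib2 (Y k) (X l) (Xinv l)
    rw [hXinv l hl, Pone2, Pskew (Y k) (X l), hXY' l k hl hk] at h
    have h2 : X l * P (Y k) (Xinv l) = Xinv l * (cc A l k * (X l * X k)) := by
      linear_combination -h
    have h3 := hcancel l hl _ _ h2
    rw [h3]
    linear_combination (cc A l k * X k * Xinv l) * hXinv l hl
  -- brackets with q l = Y l * Xinv l
  have hXq : ∀ k l : ℕ, k ≤ n → l ≤ n →
      P (X k) (Y l * Xinv l) = cc A k l * X k := by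
    intro k l hk hl
    rw [Pleib2, hXXinv k l hk hl, mul_zero, zero_add, hXY' k l hk hl]
    linear_combination (cc A k l * X k) * hXinv l hl
  have hXinvq : ∀ k l : ℕ, k ≤ n → l ≤ n →
      P (Xinv k) (Y l * Xinv l) = -(cc A k l * Xinv k) := by
    intro k l hk hl
    have h := Pleib (X k) (Xinv k) (Y l * Xinv l)
    rw [hXinv k hk, Pone, hXq k l hk hl] at h
    have h2 : X k * P (Xinv k) (Y l * Xinv l) = -(Xinv k * (cc A k l * X k)) := by
      linear_combination -h
    have h3 := hcancel k hk _ _ h2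
    rw [h3]
    linear_combination (-(cc A k l * Xinv k)) * hXinv k hk
  have hYq : ∀ k l : ℕ, k ≤ n → l ≤ n →
      P (Y k) (Y l * Xinv l) = cc A k l * Y k := by
    intro k l hk hl
    rw [Pleib2, hYXinv k l hk hl, hYY k l hk hl]
    rcases lt_trichotomy k l with h | h | h
    · rw [cc_of_ge h.le, cc_of_le h.le, if_neg (by omega : ¬ l < k), if_pos h]
      ring
    · subst h
      simp only [cc_of_le le_rfl, lt_irrefl, if_false]
      ring
    · rw [cc_of_le h.le, cc_of_ge h.le, if_pos h, if_neg (by omega : ¬ k < l)]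
      linear_combination ((k : A) - l) * Y k * hXinv l hl
  have hqq : ∀ k l : ℕ, k ≤ n → l ≤ n →
      P (Y k * Xinv k) (Y l * Xinv l) = 0 := by
    intro k l hk hl
    rw [Pleib, hYq k l hk hl, hXinvq k l hk hl]
    ring
  have hEq : ∀ a l : ℕ, a + 1 ≤ n → l ≤ n →
      P (X (a + 1) * Xinv a) (Y l * Xinv l) =
        (cc A (a + 1) l - cc A a l) * (X (a + 1) * Xinv a) := by
    intro a l ha1 hl
    rw [Pleib, hXinvq a l (by omega) hl, hXq (a + 1) l ha1 hl]
    ring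
  intro i j hi1 hin hj1 hjn
  have ha1 : n - i + 1 ≤ n := by omega
  have ha : n - i ≤ n := by omega
  have hb1 : n - j + 1 ≤ n := by omega
  have hb : n - j ≤ n := by omega
  rw [hE i hi1 hin, hE j hj1 hjn, hp j hj1 hjn, hp i hi1 hin]
  refine ⟨?_, ?_, ?_⟩
  · rw [Pleib, Pleib2, Pleib2, hXX _ _ ha1 hb1, hXXinv _ _ ha1 hb,
      hXinvX _ _ ha hb1, hXinvXinv _ _ ha hb]
    ring
  · rw [Psub2, hEq (n - i) (n - j + 1) (by omega) hb1, hEq (n - i) (n - j) (by omega) hb]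
    rcases lt_trichotomy i j with h | h | h
    · rw [if_neg (by omega : ¬ i = j),
        cc_of_ge (A := A) (show n - j + 1 ≤ n - i + 1 by omega),
        cc_of_ge (A := A) (show n - j + 1 ≤ n - i by omega),
        cc_of_ge (A := A) (show n - j ≤ n - i + 1 by omega),
        cc_of_ge (A := A) (show n - j ≤ n - i by omega)]
      ring
    · subst h
      rw [if_pos rfl,
        cc_of_ge (A := A) (le_refl (n - i + 1)),
        cc_of_le (A := A) (show n - i ≤ n - i + 1 by omega),
        cc_of_ge (A := A) (show n - i ≤ n - i + 1 by omega),
        cc_of_ge (A := A) (le_refl (n - i))]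
      push_cast
      ring
    · rw [if_neg (by omega : ¬ i = j),
        cc_of_le (A := A) (show n - i + 1 ≤ n - j + 1 by omega),
        cc_of_le (A := A) (show n - i ≤ n - j + 1 by omega),
        cc_of_le (A := A) (show n - i + 1 ≤ n - j by omega),
        cc_of_le (A := A) (show n - i ≤ n - j by omega)]
      ring
  · rw [Psub1, Psub2, Psub2, hqq _ _ ha1 hb1, hqq _ _ ha1 hb, hqq _ _ ha hb1, hqq _ _ ha hb]
    ring
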